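/- Let P be a probability distribution on a finite set A, M a positive integer, and f any function from A to {1,…,M}. Then d₁(P^{f(A)}) ≥ P{ a ∈ A : P(a) ≥ 2/M }, i.e. Σ_{m=1}^M |P(f⁻¹{m}) − 1/M| ≥ Σ_{a: P(a) ≥ 2/M} P(a). -/

import Mathlib

open Finset

private lemma abs_eq_two_max_sub (x : ℝ) : |x| = 2 * max x 0 - x := by
  rcases le_or_gt 0 x with h | h
  · rw [abs_of_nonneg h, max_eq_left h]; ring
  · rw [abs_of_neg h, max_eq_right h.le]; ring

/-- For any probability distribution `P` on a finite set `A` and any function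
`f : A → Fin M`, the `L¹` distance of the pushforward from the uniform distribution is at
least the mass of the set where `P a ≥ 2/M`. -/
theorem stmt_10 {A : Type*} [Fintype A] (M : ℕ) (hM : 0 < M)
    (P : A → ℝ) (hP0 : ∀ a, 0 ≤ P a) (hP1 : ∑ a, P a = 1)
    (f : A → Fin M) :
    ∑ a ∈ univ.filter (fun a => 2 / (M : ℝ) ≤ P a), P a
      ≤ ∑ m : Fin M, |(∑ a ∈ univ.filter (fun a => f a = m), P a) - 1 / M| := by
  have hMR : (0:ℝ) < M := by exact_mod_cast hM
  set Q : Fin M → ℝ := fun m => ∑ a ∈ univ.filter (fun a => f a = m), P a with hQ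
  set B : Finset A := univ.filter (fun a => 2 / (M : ℝ) ≤ P a) with hB
  set g : Fin M → ℝ := fun m => ∑ a ∈ B.filter (fun a => f a = m), P a with hg
  have hQsum : ∑ m, Q m = 1 := by
    rw [← hP1]
    exact Finset.sum_fiberwise_of_maps_to (fun a _ => mem_univ (f a)) P
  have hgsum : ∑ m, g m = ∑ a ∈ B, P a := by
    exact Finset.sum_fiberwise_of_maps_to (fun a _ => mem_univ (f a)) P
  have hgle : ∀ m, g m ≤ Q m := by
    intro m
    apply Finset.sum_le_sum_of_subset_of_nonneg
    · intro a ha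
      simp only [mem_filter, hB] at ha ⊢
      exact ⟨mem_univ a, ha.2⟩
    · intro a _ _; exact hP0 a
  have hgbig : ∀ m, g m = 0 ∨ 2 / (M:ℝ) ≤ g m := by
    intro m
    rcases (B.filter (fun a => f a = m)).eq_empty_or_nonempty with he | ⟨a, ha⟩
    · left; simp [hg, he]
    · right
      have haB : 2 / (M:ℝ) ≤ P a := by
        have := (mem_filter.mp ha).1
        simpa [hB] using this
      calc 2 / (M:ℝ) ≤ P a := haB
        _ ≤ g m := Finset.single_le_sum (fun b _ => hP0 b) ha
  -- Sum of (Q m - 1/M) is zero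
  have hzero : ∑ m, (Q m - 1 / (M:ℝ)) = 0 := by
    rw [Finset.sum_sub_distrib, hQsum, Finset.sum_const, card_univ, Fintype.card_fin]
    field_simp
    rw [nsmul_eq_mul, mul_one_div_cancel hMR.ne', sub_self]
  have habs : ∑ m, |Q m - 1 / (M:ℝ)| = 2 * ∑ m, max (Q m - 1 / (M:ℝ)) 0 := by
    calc ∑ m, |Q m - 1 / (M:ℝ)|
        = ∑ m, (2 * max (Q m - 1 / (M:ℝ)) 0 - (Q m - 1 / (M:ℝ))) := by
          exact Finset.sum_congr rfl fun m _ => abs_eq_two_max_sub _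
      _ = 2 * ∑ m, max (Q m - 1 / (M:ℝ)) 0 := by
          rw [Finset.sum_sub_distrib, hzero, Finset.mul_sum, sub_zero]
  set S : Finset (Fin M) := univ.filter (fun m => 2 / (M:ℝ) ≤ g m) with hS
  have hgS : ∑ m, g m = ∑ m ∈ S, g m := by
    symm
    apply Finset.sum_subset (subset_univ S)
    intro m _ hm
    rcases hgbig m with h | h
    · exact h
    · exact absurd (mem_filter.mpr ⟨mem_univ m, h⟩) hm
  have key : ∀ m ∈ S, g m ≤ 2 * max (Q m - 1 / (M:ℝ)) 0 := by
    intro m hm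
    have hgm : 2 / (M:ℝ) ≤ g m := (mem_filter.mp hm).2
    have h1 : 1 / (M:ℝ) ≤ g m / 2 := by
      have h2M : 2 / (M:ℝ) = 2 * (1 / M) := by ring
      rw [h2M] at hgm; linarith
    have h2 : g m / 2 ≤ Q m - 1 / (M:ℝ) := by
      have := hgle m; linarith
    calc g m = 2 * (g m / 2) := by ring
      _ ≤ 2 * (Q m - 1 / (M:ℝ)) := by linarith
      _ ≤ 2 * max (Q m - 1 / (M:ℝ)) 0 := by
          have := le_max_left (Q m - 1 / (M:ℝ)) (0:ℝ); linarith
  calc ∑ a ∈ B, P a = ∑ m ∈ S, g m := by rw [← hgsum, hgS]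
    _ ≤ ∑ m ∈ S, 2 * max (Q m - 1 / (M:ℝ)) 0 := Finset.sum_le_sum key
    _ ≤ ∑ m, 2 * max (Q m - 1 / (M:ℝ)) 0 := by
        apply Finset.sum_le_sum_of_subset_of_nonneg (subset_univ S)
        intro m _ _
        positivity
    _ = 2 * ∑ m, max (Q m - 1 / (M:ℝ)) 0 := by rw [Finset.mul_sum]
    _ = ∑ m, |Q m - 1 / (M:ℝ)| := habs.symm
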